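/- Let G be a finite simple graph on n vertices and let G̃ be the graph obtained from G by adding n new isolated vertices. Then G̃ is a Freckle Graph, and I^O(G̃) = n + i(G), where i(G) is the minimum size of an inclusion-maximal independent set of G. (This is the mathematical core of the reduction showing that deciding I^O(G) ≤ q is NP-hard.) -/

import Mathlib

namespace OnlinePaper

/-- A deterministic online algorithm in the vertex-arrival model: given the number `n` of
previously revealed vertices and the Boolean adjacency matrix on the `n + 1` revealed
vertices (the newly revealed vertex has index `Fin.last n`), decide whether to accept the
newly revealed vertex.  The algorithm sees only this order-canonical information. -/
def OnlineAlg : Type := (n : ℕ) → (Fin (n + 1) → Fin (n + 1) → Bool) → Bool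

/-- The complement algorithm `ĀLG`: it simulates `A` and accepts exactly the requests
that `A` rejects. -/
def coAlg (A : OnlineAlg) : OnlineAlg := fun n M => !(A n M)

variable {V : Type}

/-- The Boolean adjacency matrix on the first `i + 1` revealed vertices, when the graph `G`
is presented in the order `φ`. -/
noncomputable def revealedMatrix [Fintype V] (G : SimpleGraph V)
    (φ : Fin (Fintype.card V) ≃ V) (i : Fin (Fintype.card V)) :
    Fin (i.val + 1) → Fin (i.val + 1) → Bool :=
  fun a b =>
    @decide (G.Adj (φ ⟨a.val, by have := a.isLt; have := i.isLt; omega⟩)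
        (φ ⟨b.val, by have := b.isLt; have := i.isLt; omega⟩)) (Classical.propDecidable _)

/-- Whether the algorithm `A` accepts the vertex revealed at step `i` when the graph `G` is
presented in the order `φ`. -/
noncomputable def accepts [Fintype V] (A : OnlineAlg) (G : SimpleGraph V)
    (φ : Fin (Fintype.card V) ≃ V) (i : Fin (Fintype.card V)) : Bool :=
  A i.val (revealedMatrix G φ i)

/-- The set of vertices accepted by `A` when `G` is presented in the order `φ`. -/
noncomputable def acceptedSet [Fintype V] (A : OnlineAlg) (G : SimpleGraph V)
    (φ : Fin (Fintype.card V) ≃ V) : Finset V :=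
  Finset.univ.filter (fun v => accepts A G φ (φ.symm v) = true)

/-- `s` is an independent set of `G`. -/
def IsIndep (G : SimpleGraph V) (s : Finset V) : Prop := ∀ a ∈ s, ∀ b ∈ s, ¬ G.Adj a b

/-- `s` is a vertex cover of `G`. -/
def IsVC (G : SimpleGraph V) (s : Finset V) : Prop := ∀ a b : V, G.Adj a b → a ∈ s ∨ b ∈ s

/-- `s` is a dominating set of `G`. -/
def IsDom (G : SimpleGraph V) (s : Finset V) : Prop := ∀ v : V, v ∈ s ∨ ∃ u ∈ s, G.Adj u v

/-- `s` is an inclusion-maximal independent set of `G`. -/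
def IsMaxIndep [DecidableEq V] (G : SimpleGraph V) (s : Finset V) : Prop :=
  IsIndep G s ∧ ∀ v ∉ s, ¬ IsIndep G (insert v s)

/-- For maximization problems: the worst-case (minimum over orderings) number of requests
accepted by `A` on `G`. -/
noncomputable def minScore [Fintype V] (A : OnlineAlg) (G : SimpleGraph V) : ℕ :=
  sInf {m | ∃ φ : Fin (Fintype.card V) ≃ V, (acceptedSet A G φ).card = m}

/-- For minimization problems: the worst-case (maximum over orderings) number of requests
accepted by `A` on `G`. -/
noncomputable def maxScore [Fintype V] (A : OnlineAlg) (G : SimpleGraph V) : ℕ :=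
  sSup {m | ∃ φ : Fin (Fintype.card V) ≃ V, (acceptedSet A G φ).card = m}

/-- The online independence number `I^O(G)`: the largest `m` such that some online
algorithm accepts, on every ordering, an independent set of size at least `m`. -/
noncomputable def onlineIndepNum [Fintype V] (G : SimpleGraph V) : ℕ :=
  sSup {m | ∃ A : OnlineAlg, ∀ φ : Fin (Fintype.card V) ≃ V,
      IsIndep G (acceptedSet A G φ) ∧ m ≤ (acceptedSet A G φ).card}

/-- The online vertex cover number `V^O(G)`: the smallest `m` such that some online
algorithm accepts, on every ordering, a vertex cover of size at most `m`. -/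
noncomputable def onlineVCNum [Fintype V] (G : SimpleGraph V) : ℕ :=
  sInf {m | ∃ A : OnlineAlg, ∀ φ : Fin (Fintype.card V) ≃ V,
      IsVC G (acceptedSet A G φ) ∧ (acceptedSet A G φ).card ≤ m}

/-- The online domination number `D^O(G)`: the smallest `m` such that some online
algorithm accepts, on every ordering, a dominating set of size at most `m`. -/
noncomputable def onlineDomNum [Fintype V] (G : SimpleGraph V) : ℕ :=
  sInf {m | ∃ A : OnlineAlg, ∀ φ : Fin (Fintype.card V) ≃ V,
      IsDom G (acceptedSet A G φ) ∧ (acceptedSet A G φ).card ≤ m}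

/-- The greedy independent set decision: accept the newly revealed vertex iff none of its
previously revealed neighbors has been accepted (by the same greedy rule). -/
def gisAux : (n : ℕ) → (Fin (n + 1) → Fin (n + 1) → Bool) → Bool
  | n, M =>
    decide (∀ j : Fin n,
      gisAux j.val (fun a b => M (Fin.castLE (Nat.succ_le_succ j.isLt.le) a)
        (Fin.castLE (Nat.succ_le_succ j.isLt.le) b)) = true →
      M j.castSucc (Fin.last n) = false)
termination_by n => n
decreasing_by all_goals exact Fin.isLt _

/-- `GIS`, the greedy algorithm for Online Independent Set. -/
def gisAlg : OnlineAlg := fun n M => gisAux n M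

/-- `GDS`, the greedy algorithm for Online Dominating Set (the same algorithm as `GIS`). -/
def gdsAlg : OnlineAlg := gisAlg

/-- The greedy vertex cover decision: accept the newly revealed vertex iff it has a
previously revealed neighbor that was rejected (by the same greedy rule). -/
def gvcAux : (n : ℕ) → (Fin (n + 1) → Fin (n + 1) → Bool) → Bool
  | n, M =>
    decide (∃ j : Fin n,
      gvcAux j.val (fun a b => M (Fin.castLE (Nat.succ_le_succ j.isLt.le) a)
        (Fin.castLE (Nat.succ_le_succ j.isLt.le) b)) = false ∧
      M j.castSucc (Fin.last n) = true)
termination_by n => n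
decreasing_by all_goals exact Fin.isLt _

/-- `GVC`, the greedy algorithm for Online Vertex Cover. -/
def gvcAlg : OnlineAlg := fun n M => gvcAux n M

/-- `IS-STAR`: rejects the first vertex; rejects the second vertex if it is adjacent to the
first; rejects any later vertex having more than one previously revealed neighbor; accepts
every other vertex. -/
def isStarAlg : OnlineAlg := fun n M =>
  let c := (Finset.univ.filter (fun j : Fin n => M j.castSucc (Fin.last n) = true)).card
  if n = 0 then false
  else if n = 1 then decide (c = 0)
  else decide (c ≤ 1)

/-- `Almost-GIS`: identical to `GIS` except that it additionally rejects any revealed vertex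
having at least two previously revealed neighbors. -/
def almostGisAux : (n : ℕ) → (Fin (n + 1) → Fin (n + 1) → Bool) → Bool
  | n, M =>
    (decide (∀ j : Fin n,
      almostGisAux j.val (fun a b => M (Fin.castLE (Nat.succ_le_succ j.isLt.le) a)
        (Fin.castLE (Nat.succ_le_succ j.isLt.le) b)) = true →
      M j.castSucc (Fin.last n) = false)) &&
    decide ((Finset.univ.filter (fun j : Fin n => M j.castSucc (Fin.last n) = true)).card ≤ 1)
termination_by n => n
decreasing_by all_goals exact Fin.isLt _

/-- `Almost-GIS` as an online algorithm. -/
def almostGisAlg : OnlineAlg := fun n M => almostGisAux n M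

/-- The star graph `S_n`: a center `0` adjacent to `n` further vertices, and no other edges. -/
def starGraph (n : ℕ) : SimpleGraph (Fin (n + 1)) where
  Adj a b := a ≠ b ∧ (a = 0 ∨ b = 0)
  symm := ⟨fun _ _ h => ⟨h.1.symm, h.2.symm⟩⟩
  loopless := ⟨fun _ h => h.1 rfl⟩

/-- `v` is an isolated vertex of `G`. -/
def IsIsolated (G : SimpleGraph V) (v : V) : Prop := ∀ u : V, ¬ G.Adj v u

/-- `k(G)`: the number of isolated vertices of `G`. -/
noncomputable def numIsolated [Fintype V] (G : SimpleGraph V) : ℕ :=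
  Finset.card (@Finset.filter V (fun v => IsIsolated G v) (Classical.decPred _) Finset.univ)

/-- `G'`: the subgraph of `G` induced by the non-isolated vertices. -/
def inducedNonIsolated (G : SimpleGraph V) : SimpleGraph {v : V // ¬ IsIsolated G v} :=
  SimpleGraph.comap Subtype.val G

noncomputable instance {α : Type} [Fintype α] {p : α → Prop} : Fintype {v : α // p v} :=
  Fintype.ofFinite _

/-- The independent domination number: the minimum size of an inclusion-maximal independent
set of `G`. -/
noncomputable def indepDomNum [DecidableEq V] (G : SimpleGraph V) : ℕ :=
  sInf {m | ∃ s : Finset V, IsMaxIndep G s ∧ s.card = m}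

/-- The independence number `α(G)`: the maximum size of an independent set of `G`. -/
noncomputable def indepNum (G : SimpleGraph V) : ℕ :=
  sSup {m | ∃ s : Finset V, IsIndep G s ∧ s.card = m}

/-- `G` is a Freckle Graph: `k(G) + s(G') ≥ I^O(G')`. -/
noncomputable def IsFreckle [Fintype V] [DecidableEq V] (G : SimpleGraph V) : Prop :=
  onlineIndepNum (inducedNonIsolated G) ≤ numIsolated G + indepDomNum (inducedNonIsolated G)


/-- The graph `G̃` obtained from `G` by adding `k` new isolated vertices. -/
def addIsolated (G : SimpleGraph V) (k : ℕ) : SimpleGraph (V ⊕ Fin k) where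
  Adj a b := ∃ u v : V, G.Adj u v ∧ a = Sum.inl u ∧ b = Sum.inl v
  symm := by
    constructor
    rintro a b ⟨u, v, h, ha, hb⟩
    exact ⟨v, u, h.symm, hb, ha⟩
  loopless := by
    constructor
    rintro a ⟨u, v, h, rfl, hb⟩
    simp only [Sum.inl.injEq] at hb
    subst hb
    exact G.loopless.irrefl u h

/-! ### Auxiliary lemmas for Statement 18 -/

section Aux18

variable {W : Type}

lemma mem_acceptedSet_iff [Fintype W] (A : OnlineAlg) (H : SimpleGraph W)
    (φ : Fin (Fintype.card W) ≃ W) (w : W) :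
    w ∈ acceptedSet A H φ ↔ accepts A H φ (φ.symm w) = true := by
  simp [acceptedSet]

/-- On an independent prefix, the revealed matrix is all-false, so the decision depends
only on the position. -/
lemma accepts_of_prefix_indep [Fintype W] (A : OnlineAlg) (H : SimpleGraph W)
    (φ : Fin (Fintype.card W) ≃ W) (i : Fin (Fintype.card W))
    (h : ∀ a b : Fin (Fintype.card W), a ≤ i → b ≤ i → ¬ H.Adj (φ a) (φ b)) :
    accepts A H φ i = A i.val (fun _ _ => false) := by
  unfold accepts
  congr 1
  funext a b
  simp only [revealedMatrix]
  rw [decide_eq_false_iff_not]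
  exact h ⟨a.val, by have := a.isLt; have := i.isLt; omega⟩
    ⟨b.val, by have := b.isLt; have := i.isLt; omega⟩
    (by rw [Fin.le_def]; exact Nat.lt_succ_iff.mp a.isLt)
    (by rw [Fin.le_def]; exact Nat.lt_succ_iff.mp b.isLt)

lemma restrict_revealedMatrix [Fintype W] (H : SimpleGraph W) (φ : Fin (Fintype.card W) ≃ W)
    (i : Fin (Fintype.card W)) (j : Fin i.val) :
    (fun a b => revealedMatrix H φ i (Fin.castLE (Nat.succ_le_succ j.isLt.le) a)
      (Fin.castLE (Nat.succ_le_succ j.isLt.le) b))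
      = revealedMatrix H φ ⟨j.val, lt_trans j.isLt i.isLt⟩ := rfl

lemma gis_accepts_iff [Fintype W] (H : SimpleGraph W) (φ : Fin (Fintype.card W) ≃ W)
    (i : Fin (Fintype.card W)) :
    accepts gisAlg H φ i = true ↔
      ∀ j : Fin (Fintype.card W), j < i → accepts gisAlg H φ j = true →
        ¬ H.Adj (φ j) (φ i) := by
  have hstep : accepts gisAlg H φ i = gisAux i.val (revealedMatrix H φ i) := rfl
  rw [hstep, gisAux, decide_eq_true_eq]
  constructor
  · intro h j hj hacc
    have hjlt : j.val < i.val := hj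
    have h' := h ⟨j.val, hjlt⟩
    rw [restrict_revealedMatrix] at h'
    have h'' := h' hacc
    simp only [revealedMatrix] at h''
    rw [decide_eq_false_iff_not] at h''
    exact h''
  · intro h j
    rw [restrict_revealedMatrix]
    intro hacc
    have h' := h ⟨j.val, lt_trans j.isLt i.isLt⟩ (by exact j.isLt) hacc
    simp only [revealedMatrix]
    rw [decide_eq_false_iff_not]
    exact h'

lemma gis_isMaxIndep [Fintype W] [DecidableEq W] (H : SimpleGraph W)
    (φ : Fin (Fintype.card W) ≃ W) :
    IsMaxIndep H (acceptedSet gisAlg H φ) := by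
  constructor
  · intro a ha b hb hadj
    rw [mem_acceptedSet_iff] at ha hb
    have hne : φ.symm a ≠ φ.symm b := by
      intro hh
      exact H.ne_of_adj hadj (by
        have := congrArg φ hh
        simpa using this)
    rcases lt_or_gt_of_ne hne with hlt | hlt
    · have := (gis_accepts_iff H φ (φ.symm b)).mp hb (φ.symm a) hlt ha
      simp only [Equiv.apply_symm_apply] at this
      exact this hadj
    · have := (gis_accepts_iff H φ (φ.symm a)).mp ha (φ.symm b) hlt hb
      simp only [Equiv.apply_symm_apply] at this
      exact this hadj.symm
  · intro v hv hind
    rw [mem_acceptedSet_iff] at hv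
    have hv' : ¬ (∀ j : Fin (Fintype.card W), j < φ.symm v →
        accepts gisAlg H φ j = true → ¬ H.Adj (φ j) (φ (φ.symm v))) := by
      intro hh
      exact hv ((gis_accepts_iff H φ (φ.symm v)).mpr hh)
    push_neg at hv'
    obtain ⟨j, _, haccj, hadj⟩ := hv'
    rw [Equiv.apply_symm_apply] at hadj
    apply hind (φ j) ?_ v (Finset.mem_insert_self _ _) hadj
    apply Finset.mem_insert_of_mem
    rw [mem_acceptedSet_iff, Equiv.symm_apply_apply]
    exact haccj

lemma addIsolated_adj_inl {G : SimpleGraph V} {k : ℕ} {u v : V} :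
    (addIsolated G k).Adj (Sum.inl u) (Sum.inl v) ↔ G.Adj u v := by
  constructor
  · rintro ⟨u', v', h, hu, hv⟩
    simp only [Sum.inl.injEq] at hu hv
    subst hu; subst hv; exact h
  · intro h; exact ⟨u, v, h, rfl, rfl⟩

lemma addIsolated_not_adj_inr_left {G : SimpleGraph V} {k : ℕ} {j : Fin k} {b : V ⊕ Fin k} :
    ¬ (addIsolated G k).Adj (Sum.inr j) b := by
  rintro ⟨u, v, _, ha, _⟩; exact absurd ha (by simp)

lemma addIsolated_not_adj_inr_right {G : SimpleGraph V} {k : ℕ} {j : Fin k} {b : V ⊕ Fin k} :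
    ¬ (addIsolated G k).Adj b (Sum.inr j) := by
  rintro ⟨u, v, _, _, hb⟩; exact absurd hb (by simp)

lemma exists_adj_of_maxIndep [DecidableEq V] {G : SimpleGraph V} {s : Finset V}
    (hs : IsMaxIndep G s) {v : V} (hv : v ∉ s) : ∃ u ∈ s, G.Adj u v := by
  have h := hs.2 v hv
  unfold IsIndep at h
  push_neg at h
  obtain ⟨a, ha, b, hb, hab⟩ := h
  rcases Finset.mem_insert.mp ha with rfl | haS
  · rcases Finset.mem_insert.mp hb with rfl | hbS
    · exact absurd hab (G.loopless.irrefl _)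
    · exact ⟨b, hbS, hab.symm⟩
  · rcases Finset.mem_insert.mp hb with rfl | hbS
    · exact ⟨a, haS, hab⟩
    · exact absurd hab (hs.1 a haS b hbS)

lemma exists_maxIndep [Fintype V] [DecidableEq V] (G : SimpleGraph V) :
    ∃ s : Finset V, IsMaxIndep G s := by
  classical
  obtain ⟨s, hs, hmax⟩ := Finset.exists_max_image
    (Finset.univ.filter (fun t : Finset V => IsIndep G t)) (fun t => t.card)
    ⟨∅, Finset.mem_filter.mpr ⟨Finset.mem_univ _, by simp [IsIndep]⟩⟩
  refine ⟨s, (Finset.mem_filter.mp hs).2, fun v hv hind => ?_⟩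
  have hcard := hmax (insert v s) (Finset.mem_filter.mpr ⟨Finset.mem_univ _, hind⟩)
  rw [Finset.card_insert_of_notMem hv] at hcard
  omega

lemma exists_min_maxIndep [Fintype V] [DecidableEq V] (G : SimpleGraph V) :
    ∃ s : Finset V, IsMaxIndep G s ∧ s.card = indepDomNum G := by
  have hne : {m | ∃ s : Finset V, IsMaxIndep G s ∧ s.card = m}.Nonempty := by
    obtain ⟨s, hs⟩ := exists_maxIndep G
    exact ⟨s.card, s, hs, rfl⟩
  obtain ⟨s, hs, h⟩ := Nat.sInf_mem hne
  exact ⟨s, hs, h⟩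

lemma indepDomNum_le_card_of_maxIndep [Fintype V] [DecidableEq V] {G : SimpleGraph V}
    {s : Finset V} (hs : IsMaxIndep G s) : indepDomNum G ≤ s.card :=
  Nat.sInf_le ⟨s, hs, rfl⟩

/-- Every inclusion-maximal independent set of `G̃` has at least `n + i(G)` elements. -/
lemma card_of_maxIndep_addIsolated [Fintype V] [DecidableEq V] {G : SimpleGraph V}
    {M : Finset (V ⊕ Fin (Fintype.card V))}
    (hM : IsMaxIndep (addIsolated G (Fintype.card V)) M) :
    Fintype.card V + indepDomNum G ≤ M.card := by
  classical
  have hinr : ∀ k : Fin (Fintype.card V), Sum.inr k ∈ M := by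
    intro k
    by_contra hk
    apply hM.2 _ hk
    intro a ha b hb hadj
    obtain ⟨u, v, h, ha', hb'⟩ := hadj
    have haM : a ∈ M := by
      rcases Finset.mem_insert.mp ha with h1 | h1
      · exact absurd (h1 ▸ ha') (by simp)
      · exact h1
    have hbM : b ∈ M := by
      rcases Finset.mem_insert.mp hb with h1 | h1
      · exact absurd (h1 ▸ hb') (by simp)
      · exact h1
    exact hM.1 a haM b hbM ⟨u, v, h, ha', hb'⟩
  set MV : Finset V := Finset.univ.filter (fun v => Sum.inl v ∈ M) with hMV
  have hmemMV : ∀ v : V, v ∈ MV ↔ Sum.inl v ∈ M := by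
    intro v; simp [hMV]
  have hMVmax : IsMaxIndep G MV := by
    constructor
    · intro u hu v hv hadj
      exact hM.1 _ ((hmemMV u).mp hu) _ ((hmemMV v).mp hv) (addIsolated_adj_inl.mpr hadj)
    · intro v hv hind
      apply hM.2 (Sum.inl v) (fun h => hv ((hmemMV v).mpr h))
      rintro a ha b hb ⟨u', v', h, rfl, rfl⟩
      have hu' : u' ∈ insert v MV := by
        rcases Finset.mem_insert.mp ha with h1 | h1
        · simp only [Sum.inl.injEq] at h1
          exact h1 ▸ Finset.mem_insert_self _ _
        · exact Finset.mem_insert_of_mem ((hmemMV u').mpr h1)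
      have hv' : v' ∈ insert v MV := by
        rcases Finset.mem_insert.mp hb with h1 | h1
        · simp only [Sum.inl.injEq] at h1
          exact h1 ▸ Finset.mem_insert_self _ _
        · exact Finset.mem_insert_of_mem ((hmemMV v').mpr h1)
      exact hind u' hu' v' hv' h
  have hMeq : M = MV.image Sum.inl ∪
      (Finset.univ : Finset (Fin (Fintype.card V))).image Sum.inr := by
    ext w
    constructor
    · intro hw
      cases w with
      | inl v =>
        exact Finset.mem_union_left _ (Finset.mem_image_of_mem _ ((hmemMV v).mpr hw))
      | inr k =>
        exact Finset.mem_union_right _ (Finset.mem_image_of_mem _ (Finset.mem_univ _))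
    · intro hw
      rcases Finset.mem_union.mp hw with h1 | h1
      · obtain ⟨v, hv, rfl⟩ := Finset.mem_image.mp h1
        exact (hmemMV v).mp hv
      · obtain ⟨k, _, rfl⟩ := Finset.mem_image.mp h1
        exact hinr k
  have hcard : M.card = MV.card + Fintype.card V := by
    rw [hMeq, Finset.card_union_of_disjoint, Finset.card_image_of_injective _ Sum.inl_injective,
      Finset.card_image_of_injective _ Sum.inr_injective, Finset.card_univ, Fintype.card_fin]
    rw [Finset.disjoint_left]
    rintro a ha hb
    obtain ⟨v, _, rfl⟩ := Finset.mem_image.mp ha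
    obtain ⟨k, _, hk⟩ := Finset.mem_image.mp hb
    exact absurd hk (by simp)
  have := indepDomNum_le_card_of_maxIndep hMVmax
  omega

lemma card_filter_val_lt (N k : ℕ) (h : k ≤ N) :
    ((Finset.univ : Finset (Fin N)).filter (fun t => t.val < k)).card = k := by
  have h2 : ((Finset.univ : Finset (Fin N)).filter (fun t => t.val < k)).card
      = (Finset.range k).card := by
    apply Finset.card_bij (fun t _ => t.val)
    · intro t ht
      exact Finset.mem_range.mpr (Finset.mem_filter.mp ht).2
    · intro t₁ _ t₂ _ hh
      exact Fin.ext hh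
    · intro m hm
      have hm' := Finset.mem_range.mp hm
      exact ⟨⟨m, lt_of_lt_of_le hm' h⟩, Finset.mem_filter.mpr ⟨Finset.mem_univ _, hm'⟩, rfl⟩
  rw [h2, Finset.card_range]

/-- Glue bijections on a three-part partition into an equivalence of the ambient types. -/
lemma glue3 {α β : Type} [Fintype α] [Fintype β] [DecidableEq α] [DecidableEq β]
    (s₁ s₂ s₃ : Finset α) (t₁ t₂ t₃ : Finset β)
    (hcover : ∀ x : α, x ∈ s₁ ∨ x ∈ s₂ ∨ x ∈ s₃)
    (hs12 : ∀ x ∈ s₁, x ∉ s₂) (hs13 : ∀ x ∈ s₁, x ∉ s₃) (hs23 : ∀ x ∈ s₂, x ∉ s₃)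
    (ht12 : ∀ x ∈ t₁, x ∉ t₂) (ht13 : ∀ x ∈ t₁, x ∉ t₃) (ht23 : ∀ x ∈ t₂, x ∉ t₃)
    (h1 : s₁.card = t₁.card) (h2 : s₂.card = t₂.card) (h3 : s₃.card = t₃.card)
    (hcard : Fintype.card α = Fintype.card β) :
    ∃ e : α ≃ β, (∀ x ∈ s₁, e x ∈ t₁) ∧ (∀ x ∈ s₂, e x ∈ t₂) ∧ (∀ x ∈ s₃, e x ∈ t₃) := by
  classical
  set e₁ := Finset.equivOfCardEq h1
  set e₂ := Finset.equivOfCardEq h2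
  set e₃ := Finset.equivOfCardEq h3
  have hcov3 : ∀ x : α, x ∉ s₁ → x ∉ s₂ → x ∈ s₃ := by
    intro x hx1 hx2
    rcases hcover x with h | h | h
    · exact absurd h hx1
    · exact absurd h hx2
    · exact h
  set f : α → β := fun x =>
    if hx1 : x ∈ s₁ then (e₁ ⟨x, hx1⟩ : β)
    else if hx2 : x ∈ s₂ then (e₂ ⟨x, hx2⟩ : β)
    else (e₃ ⟨x, hcov3 x hx1 hx2⟩ : β) with hf
  have hmem : ∀ x : α, (x ∈ s₁ → f x ∈ t₁) ∧ (x ∈ s₂ → f x ∈ t₂) ∧ (x ∈ s₃ → f x ∈ t₃) := by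
    intro x
    refine ⟨fun hx => ?_, fun hx => ?_, fun hx => ?_⟩
    · simp only [hf, dif_pos hx]; exact (e₁ ⟨x, hx⟩).2
    · have hx1 : x ∉ s₁ := fun h => hs12 x h hx
      simp only [hf, dif_neg hx1, dif_pos hx]; exact (e₂ ⟨x, hx⟩).2
    · have hx1 : x ∉ s₁ := fun h => hs13 x h hx
      have hx2 : x ∉ s₂ := fun h => hs23 x h hx
      simp only [hf, dif_neg hx1, dif_neg hx2]; exact (e₃ ⟨x, _⟩).2
  have hinj : Function.Injective f := by
    intro x y hxy
    have hx := hmem x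
    have hy := hmem y
    have hpiece : ∀ z : α, (z ∈ s₁ ∧ f z ∈ t₁) ∨ (z ∈ s₂ ∧ f z ∈ t₂) ∨ (z ∈ s₃ ∧ f z ∈ t₃) := by
      intro z
      rcases hcover z with h | h | h
      · exact Or.inl ⟨h, (hmem z).1 h⟩
      · exact Or.inr (Or.inl ⟨h, (hmem z).2.1 h⟩)
      · exact Or.inr (Or.inr ⟨h, (hmem z).2.2 h⟩)
    have same : (x ∈ s₁ ∧ y ∈ s₁) ∨ (x ∈ s₂ ∧ y ∈ s₂) ∨ (x ∈ s₃ ∧ y ∈ s₃) := by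
      rcases hpiece x with ⟨hx1, hfx⟩ | ⟨hx1, hfx⟩ | ⟨hx1, hfx⟩ <;>
        rcases hpiece y with ⟨hy1, hfy⟩ | ⟨hy1, hfy⟩ | ⟨hy1, hfy⟩
      · exact Or.inl ⟨hx1, hy1⟩
      · exact absurd (hxy ▸ hfx) (fun h => ht12 _ h (hxy ▸ hfy))
      · exact absurd (hxy ▸ hfx) (fun h => ht13 _ h (hxy ▸ hfy))
      · exact absurd (hxy ▸ hfy) (fun h => ht12 _ h (hxy ▸ hfx))
      · exact Or.inr (Or.inl ⟨hx1, hy1⟩)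
      · exact absurd (hxy ▸ hfx) (fun h => ht23 _ h (hxy ▸ hfy))
      · exact absurd (hxy ▸ hfy) (fun h => ht13 _ h (hxy ▸ hfx))
      · exact absurd (hxy ▸ hfy) (fun h => ht23 _ h (hxy ▸ hfx))
      · exact Or.inr (Or.inr ⟨hx1, hy1⟩)
    rcases same with ⟨hx1, hy1⟩ | ⟨hx1, hy1⟩ | ⟨hx1, hy1⟩
    · have : (e₁ ⟨x, hx1⟩ : β) = (e₁ ⟨y, hy1⟩ : β) := by
        simpa only [hf, dif_pos hx1, dif_pos hy1] using hxy
      have := e₁.injective (Subtype.ext this)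
      exact congrArg Subtype.val this
    · have hx0 : x ∉ s₁ := fun h => hs12 x h hx1
      have hy0 : y ∉ s₁ := fun h => hs12 y h hy1
      have : (e₂ ⟨x, hx1⟩ : β) = (e₂ ⟨y, hy1⟩ : β) := by
        simpa only [hf, dif_neg hx0, dif_pos hx1, dif_neg hy0, dif_pos hy1] using hxy
      have := e₂.injective (Subtype.ext this)
      exact congrArg Subtype.val this
    · have hx0 : x ∉ s₁ := fun h => hs13 x h hx1
      have hy0 : y ∉ s₁ := fun h => hs13 y h hy1
      have hx0' : x ∉ s₂ := fun h => hs23 x h hx1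
      have hy0' : y ∉ s₂ := fun h => hs23 y h hy1
      have : (e₃ ⟨x, hx1⟩ : β) = (e₃ ⟨y, hy1⟩ : β) := by
        simpa only [hf, dif_neg hx0, dif_neg hx0', dif_neg hy0, dif_neg hy0'] using hxy
      have := e₃.injective (Subtype.ext this)
      exact congrArg Subtype.val this
  have hbij : Function.Bijective f :=
    (Fintype.bijective_iff_injective_and_card f).mpr ⟨hinj, hcard⟩
  refine ⟨Equiv.ofBijective f hbij, fun x hx => ?_, fun x hx => ?_, fun x hx => ?_⟩
  · exact (hmem x).1 hx
  · exact (hmem x).2.1 hx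
  · exact (hmem x).2.2 hx

lemma rejectAll_works [Fintype V] (H : SimpleGraph V) :
    ∃ A : OnlineAlg, ∀ φ : Fin (Fintype.card V) ≃ V,
      IsIndep H (acceptedSet A H φ) ∧ 0 ≤ (acceptedSet A H φ).card := by
  refine ⟨fun _ _ => false, fun φ => ⟨?_, Nat.zero_le _⟩⟩
  intro a ha
  have ha := (mem_acceptedSet_iff (fun _ _ => false : OnlineAlg) H φ a).mp ha
  exact absurd ha (by simp [accepts])

lemma onlineIndepNum_le_card [Fintype V] (H : SimpleGraph V) :
    onlineIndepNum H ≤ Fintype.card V := by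
  apply csSup_le
  · obtain ⟨A, hA⟩ := rejectAll_works H
    exact ⟨0, A, hA⟩
  · rintro m ⟨A, hA⟩
    refine le_trans (hA (Fintype.equivFin V).symm).2 ?_
    exact le_trans (Finset.card_le_univ _) (le_of_eq Finset.card_univ)

/-- The adversary bound: no algorithm guarantees more than `n + i(G)` on `G̃`. -/
lemma adversary_bound [Fintype V] [DecidableEq V] (G : SimpleGraph V) (A : OnlineAlg) (m : ℕ)
    (hA : ∀ φ : Fin (Fintype.card (V ⊕ Fin (Fintype.card V))) ≃ (V ⊕ Fin (Fintype.card V)),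
      IsIndep (addIsolated G (Fintype.card V))
          (acceptedSet A (addIsolated G (Fintype.card V)) φ) ∧
        m ≤ (acceptedSet A (addIsolated G (Fintype.card V)) φ).card) :
    m ≤ Fintype.card V + indepDomNum G := by
  classical
  obtain ⟨s, hs, hscard⟩ := exists_min_maxIndep G
  have hsn : s.card ≤ Fintype.card V := by
    rw [← Finset.card_univ]; exact Finset.card_le_univ _
  have hN : Fintype.card (V ⊕ Fin (Fintype.card V)) = Fintype.card V + Fintype.card V := by
    simp
  set b : ℕ → Bool := fun t => A t (fun _ _ => false) with hb
  set P1 : Finset (Fin (Fintype.card (V ⊕ Fin (Fintype.card V)))) :=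
    Finset.univ.filter (fun t => t.val < Fintype.card V + s.card) with hP1
  have hP1card : P1.card = Fintype.card V + s.card := card_filter_val_lt _ _ (by omega)
  set T : Finset (Fin (Fintype.card (V ⊕ Fin (Fintype.card V)))) :=
    Finset.univ.filter (fun t => t.val < Fintype.card V + s.card ∧ b t.val = true) with hT
  have hTsub : T ⊆ P1 := by
    intro t ht
    rw [hT, Finset.mem_filter] at ht
    rw [hP1, Finset.mem_filter]
    exact ⟨ht.1, ht.2.1⟩
  -- generic accept-behaviour lemma for any ordering whose long prefix is independent
  have haccgen : ∀ (e : (V ⊕ Fin (Fintype.card V)) ≃ Fin (Fintype.card (V ⊕ Fin (Fintype.card V)))),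
      (∀ t, t.val < Fintype.card V + s.card →
        (∃ u ∈ s, e.symm t = Sum.inl u) ∨ (∃ k, e.symm t = Sum.inr k)) →
      ∀ t, t.val < Fintype.card V + s.card →
        accepts A (addIsolated G (Fintype.card V)) e.symm t = b t.val := by
    intro e hphase t ht
    have hnoadj : ∀ x y : Fin (Fintype.card (V ⊕ Fin (Fintype.card V))),
        x ≤ t → y ≤ t → ¬ (addIsolated G (Fintype.card V)).Adj (e.symm x) (e.symm y) := by
      intro x y hx hy hadj
      have hxlt : x.val < Fintype.card V + s.card := lt_of_le_of_lt (Fin.le_def.mp hx) ht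
      have hylt : y.val < Fintype.card V + s.card := lt_of_le_of_lt (Fin.le_def.mp hy) ht
      rcases hphase x hxlt with ⟨u, hu, hhx⟩ | ⟨k, hhx⟩
      · rcases hphase y hylt with ⟨v, hv, hhy⟩ | ⟨k, hhy⟩
        · rw [hhx, hhy] at hadj
          exact hs.1 u hu v hv (addIsolated_adj_inl.mp hadj)
        · rw [hhy] at hadj
          exact addIsolated_not_adj_inr_right hadj
      · rw [hhx] at hadj
        exact addIsolated_not_adj_inr_left hadj
    exact accepts_of_prefix_indep A _ e.symm t hnoadj
  by_cases hcase : s.card ≤ T.card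
  · -- the algorithm accepts at least `s.card` of the first `n + s.card` requests:
    -- place `s` on accepting positions.
    obtain ⟨T', hT'sub, hT'card⟩ := Finset.exists_subset_card_eq hcase
    have hT'P1 : T' ⊆ P1 := fun x hx => hTsub (hT'sub hx)
    obtain ⟨e, he1, he2, he3⟩ := glue3
      (s.image Sum.inl) ((Finset.univ : Finset (Fin (Fintype.card V))).image Sum.inr)
      ((Finset.univ \ s).image Sum.inl)
      T' (P1 \ T') (Finset.univ \ P1)
      (by
        rintro (v | k)
        · by_cases hv : v ∈ s
          · exact Or.inl (Finset.mem_image_of_mem _ hv)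
          · exact Or.inr (Or.inr (Finset.mem_image_of_mem _ (by simp [hv])))
        · exact Or.inr (Or.inl (Finset.mem_image_of_mem _ (Finset.mem_univ _))))
      (by
        intro w hw hw'
        obtain ⟨v, _, rfl⟩ := Finset.mem_image.mp hw
        obtain ⟨k, _, hk⟩ := Finset.mem_image.mp hw'
        exact absurd hk (by simp))
      (by
        intro w hw hw'
        obtain ⟨v, hv, rfl⟩ := Finset.mem_image.mp hw
        obtain ⟨u, hu, hk⟩ := Finset.mem_image.mp hw'
        simp only [Sum.inl.injEq] at hk
        subst hk
        exact (Finset.mem_sdiff.mp hu).2 hv)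
      (by
        intro w hw hw'
        obtain ⟨k, _, rfl⟩ := Finset.mem_image.mp hw
        obtain ⟨u, _, hk⟩ := Finset.mem_image.mp hw'
        exact absurd hk (by simp))
      (fun x hx hx' => (Finset.mem_sdiff.mp hx').2 hx)
      (fun x hx hx' => (Finset.mem_sdiff.mp hx').2 (hT'P1 hx))
      (fun x hx hx' => (Finset.mem_sdiff.mp hx').2 (Finset.mem_sdiff.mp hx).1)
      (by rw [Finset.card_image_of_injective _ Sum.inl_injective, hT'card])
      (by
        rw [Finset.card_image_of_injective _ Sum.inr_injective, Finset.card_univ,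
          Fintype.card_fin, Finset.card_sdiff_of_subset hT'P1, hP1card, hT'card]
        omega)
      (by
        rw [Finset.card_image_of_injective _ Sum.inl_injective,
          Finset.card_sdiff_of_subset (Finset.subset_univ _), Finset.card_sdiff_of_subset (Finset.subset_univ _),
          Finset.card_univ, Finset.card_univ, Fintype.card_fin, hP1card, hN]
        omega)
      (by simp)
    have hphase : ∀ t, t.val < Fintype.card V + s.card →
        (∃ u ∈ s, e.symm t = Sum.inl u) ∨ (∃ k, e.symm t = Sum.inr k) := by
      intro t ht
      rcases (by
        rintro (v | k)
        · by_cases hv : v ∈ s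
          · exact Or.inl (Finset.mem_image_of_mem Sum.inl hv)
          · exact Or.inr (Or.inr (Finset.mem_image_of_mem Sum.inl (by simp [hv])))
        · exact Or.inr (Or.inl (Finset.mem_image_of_mem _ (Finset.mem_univ k))) :
          ∀ w : V ⊕ Fin (Fintype.card V), w ∈ s.image Sum.inl ∨
            w ∈ (Finset.univ : Finset (Fin (Fintype.card V))).image Sum.inr ∨
            w ∈ (Finset.univ \ s).image Sum.inl) (e.symm t) with h | h | h
      · obtain ⟨u, hu, hh⟩ := Finset.mem_image.mp h
        exact Or.inl ⟨u, hu, hh.symm⟩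
      · obtain ⟨k, _, hh⟩ := Finset.mem_image.mp h
        exact Or.inr ⟨k, hh.symm⟩
      · exfalso
        have h3 := he3 _ h
        rw [Equiv.apply_symm_apply] at h3
        exact (Finset.mem_sdiff.mp h3).2 (by rw [hP1, Finset.mem_filter]; exact ⟨Finset.mem_univ _, ht⟩)
    have hacc := haccgen e hphase
    have hsacc : ∀ u ∈ s, Sum.inl u ∈ acceptedSet A (addIsolated G (Fintype.card V)) e.symm := by
      intro u hu
      rw [mem_acceptedSet_iff, Equiv.symm_symm]
      have hpos : e (Sum.inl u) ∈ T' := he1 _ (Finset.mem_image_of_mem _ hu)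
      have hposT := hT'sub hpos
      rw [hT, Finset.mem_filter] at hposT
      rw [hacc _ hposT.2.1]
      exact hposT.2.2
    have hindepAcc := (hA e.symm).1
    have hsubset : acceptedSet A (addIsolated G (Fintype.card V)) e.symm ⊆
        s.image Sum.inl ∪ (Finset.univ : Finset (Fin (Fintype.card V))).image Sum.inr := by
      intro w hw
      cases w with
      | inr k => exact Finset.mem_union_right _ (Finset.mem_image_of_mem _ (Finset.mem_univ _))
      | inl v =>
        by_cases hv : v ∈ s
        · exact Finset.mem_union_left _ (Finset.mem_image_of_mem _ hv)
        · exfalso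
          obtain ⟨u, hu, hadj⟩ := exists_adj_of_maxIndep hs hv
          exact hindepAcc _ (hsacc u hu) _ hw (addIsolated_adj_inl.mpr hadj)
    have hm := (hA e.symm).2
    have hcard2 : (acceptedSet A (addIsolated G (Fintype.card V)) e.symm).card ≤
        s.card + Fintype.card V := by
      refine le_trans (Finset.card_le_card hsubset)
        (le_trans (Finset.card_union_le (s.image (Sum.inl : V → V ⊕ Fin (Fintype.card V)))
          ((Finset.univ : Finset (Fin (Fintype.card V))).image Sum.inr)) ?_)
      have hh1 : (s.image (Sum.inl : V → V ⊕ Fin (Fintype.card V))).card ≤ s.card :=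
        Finset.card_image_le
      have hh2 : (((Finset.univ : Finset (Fin (Fintype.card V))).image
          (Sum.inr : Fin (Fintype.card V) → V ⊕ Fin (Fintype.card V)))).card ≤
          Fintype.card V := by
        refine le_trans Finset.card_image_le ?_
        rw [Finset.card_univ, Fintype.card_fin]
      omega
    omega
  · -- the algorithm accepts fewer than `s.card` of the first `n + s.card` requests.
    obtain ⟨e, he1, he2, he3⟩ := glue3
      (s.image Sum.inl ∪ (Finset.univ : Finset (Fin (Fintype.card V))).image Sum.inr)
      ((Finset.univ \ s).image Sum.inl) (∅ : Finset (V ⊕ Fin (Fintype.card V)))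
      P1 (Finset.univ \ P1) (∅ : Finset (Fin (Fintype.card (V ⊕ Fin (Fintype.card V)))))
      (by
        rintro (v | k)
        · by_cases hv : v ∈ s
          · exact Or.inl (Finset.mem_union_left _ (Finset.mem_image_of_mem _ hv))
          · exact Or.inr (Or.inl (Finset.mem_image_of_mem _ (by simp [hv])))
        · exact Or.inl (Finset.mem_union_right _ (Finset.mem_image_of_mem _ (Finset.mem_univ _))))
      (by
        intro w hw hw'
        obtain ⟨u, hu, hk⟩ := Finset.mem_image.mp hw'
        rcases Finset.mem_union.mp hw with h1 | h1
        · obtain ⟨v, hv, rfl⟩ := Finset.mem_image.mp h1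
          simp only [Sum.inl.injEq] at hk
          subst hk
          exact (Finset.mem_sdiff.mp hu).2 hv
        · obtain ⟨k, _, rfl⟩ := Finset.mem_image.mp h1
          exact absurd hk (by simp))
      (fun x _ hx' => absurd hx' (Finset.notMem_empty x))
      (fun x _ hx' => absurd hx' (Finset.notMem_empty x))
      (fun x hx hx' => (Finset.mem_sdiff.mp hx').2 hx)
      (fun x _ hx' => absurd hx' (Finset.notMem_empty x))
      (fun x _ hx' => absurd hx' (Finset.notMem_empty x))
      (by
        rw [Finset.card_union_of_disjoint, Finset.card_image_of_injective _ Sum.inl_injective,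
          Finset.card_image_of_injective _ Sum.inr_injective, Finset.card_univ,
          Fintype.card_fin, hP1card]
        · omega
        · rw [Finset.disjoint_left]
          rintro w hw hw'
          obtain ⟨v, _, rfl⟩ := Finset.mem_image.mp hw
          obtain ⟨k, _, hk⟩ := Finset.mem_image.mp hw'
          exact absurd hk (by simp))
      (by
        rw [Finset.card_image_of_injective _ Sum.inl_injective,
          Finset.card_sdiff_of_subset (Finset.subset_univ _), Finset.card_sdiff_of_subset (Finset.subset_univ _),
          Finset.card_univ, Finset.card_univ, Fintype.card_fin, hP1card, hN]
        omega)
      rfl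
      (by simp)
    have hphase : ∀ t, t.val < Fintype.card V + s.card →
        (∃ u ∈ s, e.symm t = Sum.inl u) ∨ (∃ k, e.symm t = Sum.inr k) := by
      intro t ht
      have htP1 : t ∈ P1 := by rw [hP1, Finset.mem_filter]; exact ⟨Finset.mem_univ _, ht⟩
      have hcover : e.symm t ∈ s.image Sum.inl ∪
          (Finset.univ : Finset (Fin (Fintype.card V))).image Sum.inr := by
        by_cases h1 : e.symm t ∈ (Finset.univ \ s).image Sum.inl
        · exfalso
          have h2 := he2 _ h1
          rw [Equiv.apply_symm_apply] at h2
          exact (Finset.mem_sdiff.mp h2).2 htP1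
        · cases hip : e.symm t with
          | inl v =>
            by_cases hv : v ∈ s
            · exact Finset.mem_union_left _ (Finset.mem_image_of_mem _ hv)
            · exact absurd (hip ▸ Finset.mem_image_of_mem Sum.inl
                (Finset.mem_sdiff.mpr ⟨Finset.mem_univ v, hv⟩)) (hip ▸ h1)
          | inr k =>
            exact Finset.mem_union_right _ (Finset.mem_image_of_mem _ (Finset.mem_univ _))
      rcases Finset.mem_union.mp hcover with h | h
      · obtain ⟨u, hu, hh⟩ := Finset.mem_image.mp h
        exact Or.inl ⟨u, hu, hh.symm⟩
      · obtain ⟨k, _, hh⟩ := Finset.mem_image.mp h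
        exact Or.inr ⟨k, hh.symm⟩
    have hacc := haccgen e hphase
    have hsubset : acceptedSet A (addIsolated G (Fintype.card V)) e.symm ⊆
        T.image (fun t => e.symm t) ∪ (Finset.univ \ s).image Sum.inl := by
      intro w hw
      by_cases h1 : w ∈ (Finset.univ \ s).image Sum.inl
      · exact Finset.mem_union_right _ h1
      · -- w is in the first phase
        have hw1 : w ∈ s.image Sum.inl ∪
            (Finset.univ : Finset (Fin (Fintype.card V))).image Sum.inr := by
          cases hww : w with
          | inl v =>
            by_cases hv : v ∈ s
            · exact Finset.mem_union_left _ (Finset.mem_image_of_mem _ hv)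
            · exact absurd (Finset.mem_image_of_mem Sum.inl
                (Finset.mem_sdiff.mpr ⟨Finset.mem_univ v, hv⟩)) (hww ▸ h1)
          | inr k =>
            exact Finset.mem_union_right _ (Finset.mem_image_of_mem _ (Finset.mem_univ _))
        have hpos : e w ∈ P1 := he1 _ hw1
        rw [hP1, Finset.mem_filter] at hpos
        have hw' := (mem_acceptedSet_iff _ _ _ _).mp hw
        rw [Equiv.symm_symm] at hw'
        have hbt : b (e w).val = true := by rw [← hacc _ hpos.2]; exact hw'
        have hposT : e w ∈ T := by
          rw [hT, Finset.mem_filter]; exact ⟨Finset.mem_univ _, hpos.2, hbt⟩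
        refine Finset.mem_union_left _ (Finset.mem_image.mpr ⟨e w, hposT, ?_⟩)
        exact Equiv.symm_apply_apply e w
    have hm := (hA e.symm).2
    have hTcard : T.card < s.card := not_le.mp hcase
    have hcard2 : (acceptedSet A (addIsolated G (Fintype.card V)) e.symm).card ≤
        T.card + (Fintype.card V - s.card) := by
      refine le_trans (Finset.card_le_card hsubset)
        (le_trans (Finset.card_union_le (T.image (fun t => e.symm t))
          ((Finset.univ \ s).image (Sum.inl : V → V ⊕ Fin (Fintype.card V)))) ?_)
      have hh1 : (T.image (fun t => e.symm t)).card ≤ T.card := Finset.card_image_le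
      have hh2 : ((Finset.univ \ s).image (Sum.inl : V → V ⊕ Fin (Fintype.card V))).card ≤
          Fintype.card V - s.card := by
        rw [Finset.card_image_of_injective _ Sum.inl_injective,
          Finset.card_sdiff_of_subset (Finset.subset_univ _), Finset.card_univ]
      omega
    omega

lemma freckle_part [Fintype V] [DecidableEq V] (G : SimpleGraph V) :
    IsFreckle (addIsolated G (Fintype.card V)) := by
  classical
  unfold IsFreckle
  have h1 := onlineIndepNum_le_card (inducedNonIsolated (addIsolated G (Fintype.card V)))
  have e1 : Fintype.card
      {v : V ⊕ Fin (Fintype.card V) // ¬ IsIsolated (addIsolated G (Fintype.card V)) v}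
      = (Finset.univ.filter
          (fun v => ¬ IsIsolated (addIsolated G (Fintype.card V)) v)).card :=
    Fintype.card_of_subtype _ (by intro x; simp)
  have e2 : numIsolated (addIsolated G (Fintype.card V))
      = (Finset.univ.filter (fun v => IsIsolated (addIsolated G (Fintype.card V)) v)).card := by
    unfold numIsolated
    congr 1
  have e3 : (Finset.univ.filter
        (fun v => IsIsolated (addIsolated G (Fintype.card V)) v)).card
      + (Finset.univ.filter
        (fun v => ¬ IsIsolated (addIsolated G (Fintype.card V)) v)).card
      = Fintype.card V + Fintype.card V := by
    rw [Finset.card_filter_add_card_filter_not, Finset.card_univ]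
    simp
  have h3 : Fintype.card V ≤
      (Finset.univ.filter
        (fun v => IsIsolated (addIsolated G (Fintype.card V)) v)).card := by
    have hsub : (Finset.univ : Finset (Fin (Fintype.card V))).image
        (Sum.inr : Fin (Fintype.card V) → V ⊕ Fin (Fintype.card V)) ⊆
        Finset.univ.filter (fun v => IsIsolated (addIsolated G (Fintype.card V)) v) := by
      intro w hw
      obtain ⟨k, _, rfl⟩ := Finset.mem_image.mp hw
      refine Finset.mem_filter.mpr ⟨Finset.mem_univ _, ?_⟩
      intro u
      exact addIsolated_not_adj_inr_left
    have := Finset.card_le_card hsub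
    rw [Finset.card_image_of_injective _ Sum.inr_injective, Finset.card_univ,
      Fintype.card_fin] at this
    exact this
  omega

end Aux18

/-- for a graph `G` on `n` vertices, the graph `G̃` obtained by adding `n`
new isolated vertices is a Freckle Graph, and its online independence number is
`n + i(G)`, where `i(G)` is the minimum size of an inclusion-maximal independent set
of `G`. -/
theorem statement18 {V : Type} [Fintype V] [DecidableEq V] (G : SimpleGraph V) :
    IsFreckle (addIsolated G (Fintype.card V)) ∧
      onlineIndepNum (addIsolated G (Fintype.card V)) =
        Fintype.card V + indepDomNum G := by
  classical
  constructor
  · exact freckle_part G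
  · have hmem : (Fintype.card V + indepDomNum G) ∈
        {m | ∃ A : OnlineAlg,
          ∀ φ : Fin (Fintype.card (V ⊕ Fin (Fintype.card V))) ≃ (V ⊕ Fin (Fintype.card V)),
            IsIndep (addIsolated G (Fintype.card V))
                (acceptedSet A (addIsolated G (Fintype.card V)) φ) ∧
              m ≤ (acceptedSet A (addIsolated G (Fintype.card V)) φ).card} := by
      refine ⟨gisAlg, fun φ => ⟨(gis_isMaxIndep _ φ).1,
        card_of_maxIndep_addIsolated (gis_isMaxIndep _ φ)⟩⟩
    unfold onlineIndepNum
    apply le_antisymm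
    · apply csSup_le ⟨_, hmem⟩
      rintro m ⟨A, hA⟩
      exact adversary_bound G A m hA
    · refine le_csSup ⟨Fintype.card V + indepDomNum G, ?_⟩ hmem
      rintro m ⟨A, hA⟩
      exact adversary_bound G A m hA

end OnlinePaper
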